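/- Let w be a weight structure on a triangulated category C. Then C_{w≥0} equals the class of objects Y such that Hom(X, Y) = 0 for all X ∈ C_{w≤-1}, and C_{w≤0} equals the class of objects X such that Hom(X, Y) = 0 for all Y ∈ C_{w≥1}. -/

import Mathlib

open CategoryTheory Category Limits Pretriangulated ZeroObject Opposite

universe v u u₂ v₂

variable (C : Type u) [Category.{v} C] [Preadditive C] [HasZeroObject C]
  [HasShift C ℤ] [∀ n : ℤ, (CategoryTheory.shiftFunctor C n).Additive] [Pretriangulated C]

/-- `X` is a retract (direct summand) of `Y`. -/
def IsRetract {C : Type u} [Category.{v} C] (X Y : C) : Prop :=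
  ∃ (s : X ⟶ Y) (r : Y ⟶ X), s ≫ r = 𝟙 X

/-- A weight structure on a pretriangulated category `C`, in the homological convention:
`le` is the class `C_{w≤0}` and `ge` is the class `C_{w≥0}`. -/
structure WeightStructure where
  le : Set C
  ge : Set C
  le_retract : ∀ ⦃X Y : C⦄, IsRetract X Y → Y ∈ le → X ∈ le
  ge_retract : ∀ ⦃X Y : C⦄, IsRetract X Y → Y ∈ ge → X ∈ ge
  le_shift : ∀ X : C, X ∈ le → X⟦(-1 : ℤ)⟧ ∈ le
  ge_shift : ∀ X : C, X ∈ ge → X⟦(1 : ℤ)⟧ ∈ ge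
  orth : ∀ ⦃X Y : C⦄, X ∈ le → Y ∈ ge → ∀ f : X ⟶ Y⟦(1 : ℤ)⟧, f = 0
  decomp : ∀ M : C, ∃ (L R : C) (f : L ⟶ M) (g : M ⟶ R) (h : R ⟶ L⟦(1 : ℤ)⟧),
    Triangle.mk f g h ∈ (distTriang C) ∧ L ∈ le ∧ R⟦(-1 : ℤ)⟧ ∈ ge

/-- A t-structure on a pretriangulated category `C`, in the homological convention:
`le` is the class `C_{t≤0}` and `ge` is the class `C_{t≥0}`. -/
structure HomTStructure where
  le : Set C
  ge : Set C
  le_iso : ∀ ⦃X Y : C⦄, (X ≅ Y) → Y ∈ le → X ∈ le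
  ge_iso : ∀ ⦃X Y : C⦄, (X ≅ Y) → Y ∈ ge → X ∈ ge
  le_shift : ∀ X : C, X ∈ le → X⟦(-1 : ℤ)⟧ ∈ le
  ge_shift : ∀ X : C, X ∈ ge → X⟦(1 : ℤ)⟧ ∈ ge
  orth : ∀ ⦃X Y : C⦄, X⟦(-1 : ℤ)⟧ ∈ ge → Y ∈ le → ∀ f : X ⟶ Y, f = 0
  decomp : ∀ M : C, ∃ (L R : C) (f : L ⟶ M) (g : M ⟶ R) (h : R ⟶ L⟦(1 : ℤ)⟧),
    Triangle.mk f g h ∈ (distTriang C) ∧ L ∈ ge ∧ R⟦(1 : ℤ)⟧ ∈ le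

/-- A contravariant additive functor is cohomological if it sends distinguished
triangles to exact sequences. -/
def IsCohomological {A : Type u₂} [Category.{v₂} A] [Abelian A]
    (H : Cᵒᵖ ⥤ A) [H.Additive] : Prop :=
  ∀ (T : Triangle C), ∀ hT : T ∈ distTriang C,
    (ShortComplex.mk (H.map T.mor₂.op) (H.map T.mor₁.op) (by
      rw [← H.map_comp, ← op_comp, comp_distTriang_mor_zero₁₂ _ hT, op_zero, H.map_zero])).Exact


lemma isRetract_of_iso {D : Type u} [Category.{v} D] {X Y : D} (e : X ≅ Y) :
    IsRetract X Y := ⟨e.hom, e.inv, e.hom_inv_id⟩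

/-- The classes of a weight structure are each other's Hom-orthogonals. -/
theorem weight_classes_are_orthogonals (w : WeightStructure C) :
    w.ge = {Y : C | ∀ X : C, X⟦(1 : ℤ)⟧ ∈ w.le → ∀ f : X ⟶ Y, f = 0} ∧
    w.le = {X : C | ∀ Y : C, Y⟦(-1 : ℤ)⟧ ∈ w.ge → ∀ f : X ⟶ Y, f = 0} := by
  constructor
  · ext Y
    simp only [Set.mem_setOf_eq]
    constructor
    · intro hY X hX f
      have h := w.orth hX hY ((shiftFunctor C (1 : ℤ)).map f)
      exact (shiftFunctor C (1 : ℤ)).map_injective (by rw [h, Functor.map_zero])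
    · intro hY
      obtain ⟨L, R, f, g, h, hT, hL, hR⟩ := w.decomp (Y⟦(1 : ℤ)⟧)
      have e : (L⟦(-1 : ℤ)⟧)⟦(1 : ℤ)⟧ ≅ L := (shiftEquiv C (1 : ℤ)).counitIso.app L
      have hL' : (L⟦(-1 : ℤ)⟧)⟦(1 : ℤ)⟧ ∈ w.le := w.le_retract (isRetract_of_iso e) hL
      have eY : (Y⟦(1 : ℤ)⟧)⟦(-1 : ℤ)⟧ ≅ Y := ((shiftEquiv C (1 : ℤ)).unitIso.app Y).symm
      have hg0 : (shiftFunctor C (-1 : ℤ)).map f ≫ eY.hom = 0 := hY _ hL' _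
      have hf0 : f = 0 := by
        apply (shiftFunctor C (-1 : ℤ)).map_injective
        rw [Functor.map_zero, ← cancel_mono eY.hom, hg0, zero_comp]
      obtain ⟨r, hr⟩ : ∃ r : R ⟶ Y⟦(1 : ℤ)⟧, 𝟙 _ = g ≫ r := Triangle.yoneda_exact₂ _ hT (𝟙 (Y⟦(1 : ℤ)⟧))
        (by show f ≫ _ = 0; rw [hf0, zero_comp])
      change 𝟙 _ = g ≫ r at hr
      have hret : IsRetract Y (R⟦(-1 : ℤ)⟧) := by
        refine ⟨eY.inv ≫ (shiftFunctor C (-1 : ℤ)).map g,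
          (shiftFunctor C (-1 : ℤ)).map r ≫ eY.hom, ?_⟩
        rw [assoc, ← assoc ((shiftFunctor C (-1 : ℤ)).map g), ← Functor.map_comp,
          ← hr, CategoryTheory.Functor.map_id, id_comp, eY.inv_hom_id]
      exact w.ge_retract hret hR
  · ext X
    simp only [Set.mem_setOf_eq]
    constructor
    · intro hX Y hY f
      have e : Y ≅ (Y⟦(-1 : ℤ)⟧)⟦(1 : ℤ)⟧ := ((shiftEquiv C (1 : ℤ)).counitIso.app Y).symm
      have h := w.orth hX hY (f ≫ e.hom)
      rw [← cancel_mono e.hom, h, zero_comp]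
    · intro hX
      obtain ⟨L, R, f, g, h, hT, hL, hR⟩ := w.decomp X
      have hg0 : g = 0 := hX R hR g
      obtain ⟨s, hs⟩ := Triangle.coyoneda_exact₂ _ hT (𝟙 X) (by show _ ≫ g = 0; rw [hg0, comp_zero])
      exact w.le_retract ⟨s, f, hs.symm⟩ hL
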